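/- A bounded real-valued random variable is infinitely divisible if and only if it is almost surely constant. -/

import Mathlib

open MeasureTheory ProbabilityTheory

lemma my_integral_eq {Ω Ω' : Type*} [MeasurableSpace Ω] [MeasurableSpace Ω']
    {μ : Measure Ω} {ν : Measure Ω'} {X : Ω → ℝ} {Z : Ω' → ℝ}
    (hX : Measurable X) (hZ : Measurable Z) (h : μ.map X = ν.map Z)
    {f : ℝ → ℝ} (hf : Measurable f) :
    ∫ ω, f (X ω) ∂μ = ∫ ω, f (Z ω) ∂ν := by
  rw [← integral_map hX.aemeasurable hf.aestronglyMeasurable, h,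
    integral_map hZ.aemeasurable hf.aestronglyMeasurable]

lemma my_variance_eq {Ω Ω' : Type*} [MeasurableSpace Ω] [MeasurableSpace Ω']
    {μ : Measure Ω} {ν : Measure Ω'} [IsProbabilityMeasure μ] [IsProbabilityMeasure ν]
    {X : Ω → ℝ} {Z : Ω' → ℝ} (hX : Measurable X) (hZ : Measurable Z)
    (hXm : MeasureTheory.MemLp X 2 μ) (hZm : MeasureTheory.MemLp Z 2 ν)
    (h : μ.map X = ν.map Z) :
    variance X μ = variance Z ν := by
  have h1 : μ[X] = ν[Z] := my_integral_eq hX hZ h measurable_id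
  have h2 : μ[X ^ 2] = ν[Z ^ 2] := by
    have := my_integral_eq hX hZ h (measurable_id.pow_const 2)
    simpa [Pi.pow_apply] using this
  rw [variance_eq_sub hXm, variance_eq_sub hZm, h1, h2]

lemma my_iIndepFun_const {Ω' : Type*} [MeasurableSpace Ω'] {μ' : Measure Ω'}
    [IsProbabilityMeasure μ'] {n : ℕ} (c : ℝ) :
    iIndepFun
      (fun _ : Fin n => fun _ : Ω' => c) μ' := by
  rw [iIndepFun_iff_measure_inter_preimage_eq_mul]
  intro S sets _H
  by_cases h : ∀ i ∈ S, c ∈ sets i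
  · have h1 : ∀ i ∈ S, (fun _ : Ω' => c) ⁻¹' sets i = Set.univ := by
      intro i hi; ext ω; simp [h i hi]
    have hI : (⋂ i ∈ S, (fun _ : Ω' => c) ⁻¹' sets i) = Set.univ := by
      ext ω; simp only [Set.mem_iInter, Set.mem_univ, iff_true]
      intro i hi; rw [h1 i hi]; trivial
    rw [hI, Finset.prod_congr rfl fun i hi => by rw [h1 i hi]]
    simp
  · push_neg at h
    obtain ⟨i0, hi0S, hi0⟩ := h
    have h0 : (fun _ : Ω' => c) ⁻¹' sets i0 = ∅ := by
      ext ω; simp [hi0]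
    have hsub : (⋂ i ∈ S, (fun _ : Ω' => c) ⁻¹' sets i) ⊆ ∅ := by
      rw [← h0]; exact Set.biInter_subset_of_mem hi0S
    rw [Set.subset_empty_iff.mp hsub, Finset.prod_eq_zero hi0S (by rw [h0]; simp)]
    simp

open MeasureTheory

/-- A real random variable `X` (on a probability space `(Ω, μ)`) is infinitely divisible if
for every `n ≥ 1` there exist i.i.d. random variables `Y 0, …, Y (n-1)` on some probability
space whose sum has the same distribution as `X`. -/
def IsInfinitelyDivisible {Ω : Type*} [MeasurableSpace Ω] (μ : Measure Ω) (X : Ω → ℝ) : Prop :=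
  ∀ n : ℕ, 0 < n →
    ∃ (Ω' : Type) (_ : MeasurableSpace Ω') (μ' : Measure Ω') (Y : Fin n → Ω' → ℝ),
      IsProbabilityMeasure μ' ∧ (∀ i, Measurable (Y i)) ∧
      ProbabilityTheory.iIndepFun Y μ' ∧
      (∀ i j, μ'.map (Y i) = μ'.map (Y j)) ∧
      μ'.map (fun ω => ∑ i, Y i ω) = μ.map X

/-- A bounded real-valued random variable is infinitely divisible iff it is a.s. constant. -/
theorem stmt_5 {Ω : Type*} [MeasurableSpace Ω] (μ : Measure Ω) [IsProbabilityMeasure μ]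
    (X : Ω → ℝ) (hX : Measurable X) (hbdd : ∃ C : ℝ, ∀ ω, |X ω| ≤ C) :
    IsInfinitelyDivisible μ X ↔ ∃ c : ℝ, X =ᵐ[μ] fun _ => c := by
  obtain ⟨C, hC⟩ := hbdd
  have hΩ : Nonempty Ω := by
    by_contra h
    rw [not_nonempty_iff] at h
    have h1 : μ Set.univ = 1 := measure_univ
    simp [Set.univ_eq_empty_iff.mpr h] at h1
  obtain ⟨ω0⟩ := hΩ
  have hC0 : 0 ≤ C := (abs_nonneg _).trans (hC ω0)
  have hXIcc : ∀ᵐ ω ∂μ, X ω ∈ Set.Icc (-C) C :=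
    Filter.Eventually.of_forall fun ω => abs_le.mp (hC ω)
  have hXm : MemLp X 2 μ := memLp_of_bounded hXIcc hX.aestronglyMeasurable 2
  constructor
  · intro h
    have key : ∀ n : ℕ, 0 < n → ProbabilityTheory.variance X μ ≤ C ^ 2 / n := by
      intro n hn
      obtain ⟨Ω', mΩ', μ', Y, hprob, hmeas, hindep, hident, hmap⟩ := h n hn
      have hnR : (0:ℝ) < n := Nat.cast_pos.mpr hn
      have hnR' : (n:ℝ) ≠ 0 := hnR.ne'
      set S : Ω' → ℝ := ∑ i, Y i with hS
      have hSfun : (fun ω => ∑ i, Y i ω) = S := by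
        funext ω; simp [hS]
      rw [hSfun] at hmap
      have hSmeas : Measurable S := by
        rw [← hSfun]; exact Finset.measurable_sum _ fun i _ => hmeas i
      have hup : ∀ i, μ' ((Y i) ⁻¹' Set.Ioi (C / n)) = 0 := by
        have hSbound : μ' (S ⁻¹' Set.Ioi C) = 0 := by
          rw [← Measure.map_apply hSmeas measurableSet_Ioi, hmap,
            Measure.map_apply hX measurableSet_Ioi]
          have hemp : X ⁻¹' Set.Ioi C = ∅ := by
            ext ω
            simp only [Set.mem_preimage, Set.mem_Ioi, Set.mem_empty_iff_false, iff_false, not_lt]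
            exact (abs_le.mp (hC ω)).2
          rw [hemp]; simp
        intro i
        have heq : ∀ j, μ' ((Y j) ⁻¹' Set.Ioi (C / n)) = μ' ((Y i) ⁻¹' Set.Ioi (C / n)) := by
          intro j
          rw [← Measure.map_apply (hmeas j) measurableSet_Ioi,
            ← Measure.map_apply (hmeas i) measurableSet_Ioi, hident j i]
        have hinter : μ' (⋂ j, (Y j) ⁻¹' Set.Ioi (C / n))
            = ∏ j : Fin n, μ' ((Y j) ⁻¹' Set.Ioi (C / n)) :=
          hindep.meas_iInter fun j => ⟨Set.Ioi (C / n), measurableSet_Ioi, rfl⟩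
        have hsub : (⋂ j, (Y j) ⁻¹' Set.Ioi (C / n)) ⊆ S ⁻¹' Set.Ioi C := by
          intro ω hω
          simp only [Set.mem_iInter, Set.mem_preimage, Set.mem_Ioi] at hω ⊢
          have hlt : ∑ _j : Fin n, (C / n) < ∑ j, Y j ω :=
            Finset.sum_lt_sum_of_nonempty (Finset.univ_nonempty_iff.mpr
              ⟨⟨0, hn⟩⟩) fun j _ => hω j
          have hsum : ∑ _j : Fin n, (C / (n:ℝ)) = C := by
            rw [Finset.sum_const, Finset.card_univ, Fintype.card_fin, nsmul_eq_mul,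
              mul_div_cancel₀ _ hnR']
          have hSval : S ω = ∑ j, Y j ω := by simp [hS]
          rw [hSval]
          calc C = ∑ _j : Fin n, (C / (n:ℝ)) := hsum.symm
            _ < ∑ j, Y j ω := hlt
        have hprodzero : ∏ j : Fin n, μ' ((Y j) ⁻¹' Set.Ioi (C / n)) = 0 := by
          rw [← hinter]
          exact measure_mono_null hsub hSbound
        have hpow : μ' ((Y i) ⁻¹' Set.Ioi (C / n)) ^ n = 0 := by
          rw [← hprodzero, Finset.prod_congr rfl fun j _ => heq j]
          simp
        exact pow_eq_zero_iff hn.ne' |>.mp hpow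
      have hlo : ∀ i, μ' ((Y i) ⁻¹' Set.Iio (-(C / n))) = 0 := by
        have hSbound : μ' (S ⁻¹' Set.Iio (-C)) = 0 := by
          rw [← Measure.map_apply hSmeas measurableSet_Iio, hmap,
            Measure.map_apply hX measurableSet_Iio]
          have hemp : X ⁻¹' Set.Iio (-C) = ∅ := by
            ext ω
            simp only [Set.mem_preimage, Set.mem_Iio, Set.mem_empty_iff_false, iff_false, not_lt]
            exact neg_le.mp (neg_le_of_abs_le (hC ω)) |> fun h' => by
              have := (abs_le.mp (hC ω)).1; linarith
          rw [hemp]; simp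
        intro i
        have heq : ∀ j, μ' ((Y j) ⁻¹' Set.Iio (-(C / n))) = μ' ((Y i) ⁻¹' Set.Iio (-(C / n))) := by
          intro j
          rw [← Measure.map_apply (hmeas j) measurableSet_Iio,
            ← Measure.map_apply (hmeas i) measurableSet_Iio, hident j i]
        have hinter : μ' (⋂ j, (Y j) ⁻¹' Set.Iio (-(C / n)))
            = ∏ j : Fin n, μ' ((Y j) ⁻¹' Set.Iio (-(C / n))) :=
          hindep.meas_iInter fun j => ⟨Set.Iio (-(C / n)), measurableSet_Iio, rfl⟩
        have hsub : (⋂ j, (Y j) ⁻¹' Set.Iio (-(C / n))) ⊆ S ⁻¹' Set.Iio (-C) := by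
          intro ω hω
          simp only [Set.mem_iInter, Set.mem_preimage, Set.mem_Iio] at hω ⊢
          have hlt : ∑ j, Y j ω < ∑ _j : Fin n, (-(C / n)) :=
            Finset.sum_lt_sum_of_nonempty (Finset.univ_nonempty_iff.mpr
              ⟨⟨0, hn⟩⟩) fun j _ => hω j
          have hsum : ∑ _j : Fin n, (-(C / (n:ℝ))) = -C := by
            rw [Finset.sum_const, Finset.card_univ, Fintype.card_fin, nsmul_eq_mul,
              mul_neg, mul_div_cancel₀ _ hnR']
          have hSval : S ω = ∑ j, Y j ω := by simp [hS]
          rw [hSval]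
          calc ∑ j, Y j ω < ∑ _j : Fin n, (-(C / (n:ℝ))) := hlt
            _ = -C := hsum
        have hprodzero : ∏ j : Fin n, μ' ((Y j) ⁻¹' Set.Iio (-(C / n))) = 0 := by
          rw [← hinter]
          exact measure_mono_null hsub hSbound
        have hpow : μ' ((Y i) ⁻¹' Set.Iio (-(C / n))) ^ n = 0 := by
          rw [← hprodzero, Finset.prod_congr rfl fun j _ => heq j]
          simp
        exact pow_eq_zero_iff hn.ne' |>.mp hpow
      have hYIcc : ∀ i, ∀ᵐ ω ∂μ', Y i ω ∈ Set.Icc (-(C / n)) (C / n) := by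
        intro i
        rw [ae_iff]
        refine measure_mono_null ?_ (measure_union_null (hup i) (hlo i))
        intro ω hω
        simp only [Set.mem_setOf_eq, Set.mem_Icc, not_and_or, not_le] at hω
        rcases hω with h1 | h2
        · exact Or.inr (by simpa [Set.mem_preimage, Set.mem_Iio] using h1)
        · exact Or.inl (by simpa [Set.mem_preimage, Set.mem_Ioi] using h2)
      have hYm : ∀ i, MemLp (Y i) 2 μ' := fun i =>
        memLp_of_bounded (hYIcc i) (hmeas i).aestronglyMeasurable 2
      have hvarY : ∀ i, ProbabilityTheory.variance (Y i) μ' ≤ (C / n) ^ 2 := by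
        intro i
        calc ProbabilityTheory.variance (Y i) μ' ≤ ((C / n - -(C / n)) / 2) ^ 2 :=
              ProbabilityTheory.variance_le_sq_of_bounded (hYIcc i) (hmeas i).aemeasurable
          _ = (C / n) ^ 2 := by ring
      have hSm : MemLp S 2 μ' := memLp_finset_sum' _ fun i _ => hYm i
      have hvarS : ProbabilityTheory.variance S μ'
          = ∑ i : Fin n, ProbabilityTheory.variance (Y i) μ' := by
        rw [hS]
        exact ProbabilityTheory.IndepFun.variance_sum (fun i _ => hYm i)
          fun i _ j _ hij => hindep.indepFun hij
      have hvarX : ProbabilityTheory.variance X μ = ProbabilityTheory.variance S μ' :=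
        my_variance_eq hX hSmeas hXm hSm hmap.symm
      rw [hvarX, hvarS]
      calc ∑ i : Fin n, ProbabilityTheory.variance (Y i) μ'
            ≤ ∑ _i : Fin n, (C / n) ^ 2 := Finset.sum_le_sum fun i _ => hvarY i
        _ = n * (C / n) ^ 2 := by
            rw [Finset.sum_const, Finset.card_univ, Fintype.card_fin, nsmul_eq_mul]
        _ = C ^ 2 / n := by field_simp
    have hvar0 : ProbabilityTheory.variance X μ = 0 := by
      by_contra hne
      have hpos : 0 < ProbabilityTheory.variance X μ :=
        (ProbabilityTheory.variance_nonneg X μ).lt_of_ne (Ne.symm hne)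
      obtain ⟨n, hn⟩ := exists_nat_gt (C ^ 2 / ProbabilityTheory.variance X μ)
      have hn0 : 0 < n := by
        by_contra hn0
        push_neg at hn0
        interval_cases n
        have : (0:ℝ) ≤ C ^ 2 / ProbabilityTheory.variance X μ :=
          div_nonneg (sq_nonneg C) hpos.le
        simp at hn
        linarith
      have h1 := key n hn0
      have h2 : C ^ 2 / n < ProbabilityTheory.variance X μ := by
        rw [div_lt_iff₀ (Nat.cast_pos.mpr hn0)]
        calc C ^ 2 = (C ^ 2 / ProbabilityTheory.variance X μ) * ProbabilityTheory.variance X μ :=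
              by field_simp
          _ < n * ProbabilityTheory.variance X μ := by
              exact mul_lt_mul_of_pos_right hn hpos
          _ = ProbabilityTheory.variance X μ * n := mul_comm _ _
      linarith
    have hev : ProbabilityTheory.evariance X μ = 0 := by
      rw [← hXm.ofReal_variance_eq, hvar0]; simp
    exact ⟨μ[X], (ProbabilityTheory.evariance_eq_zero_iff hX.aemeasurable).mp hev⟩
  · rintro ⟨c, hc⟩ n hn
    have hnR' : (n:ℝ) ≠ 0 := (Nat.cast_pos.mpr hn).ne'
    refine ⟨Unit, inferInstance, Measure.dirac (), fun _ _ => c / n, inferInstance,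
      fun _ => measurable_const, my_iIndepFun_const _, fun _ _ => rfl, ?_⟩
    have h1 : (fun _ : Unit => ∑ _i : Fin n, (c / n : ℝ)) = fun _ : Unit => c := by
      funext _
      rw [Finset.sum_const, Finset.card_univ, Fintype.card_fin, nsmul_eq_mul,
        mul_div_cancel₀ _ hnR']
    rw [h1, Measure.map_const, Measure.map_congr hc, Measure.map_const]
    simp
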